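/- (Convergence in probability of B_n.) Let ε_1, ε_2, … be i.i.d. real random variables with distribution function F that is differentiable in a neighbourhood of 0 with continuous density f having bounded derivative near 0. Let 𝕏_1,…,𝕏_n ∈ ℝ^r be deterministic vectors (a triangular array indexed by n) such that n^{−1} max_{1≤i≤n} 𝕏_iᵗ𝕏_i → 0 and n^{−1} Σ_{i=1}^n 𝕏_i 𝕏_iᵗ → Υ, a positive definite r × r matrix. Fix u ∈ ℝ^r and define B_n(u) = Σ_{i=1}^n ∫_0^{n^{−1/2} 𝕏_iᵗ u} [1_{ε_i < v} − 1_{ε_i < 0}] dv (oriented integrals). Then B_n(u) converges in probability to (1/2) f(0) uᵗ Υ u as n → ∞. -/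

import Mathlib

open MeasureTheory ProbabilityTheory Filter
open scoped ENNReal

set_option maxHeartbeats 1000000
set_option linter.unusedVariables false

noncomputable def gval (a x : ℝ) : ℝ := if 0 ≤ x then max (a - x) 0 else max (x - a) 0

lemma gval_nonneg (a x : ℝ) : 0 ≤ gval a x := by
  unfold gval; split <;> exact le_max_right _ _

lemma gval_le_abs (a x : ℝ) : gval a x ≤ |a| := by
  unfold gval; rcases abs_cases a with ⟨h, _⟩ | ⟨h, _⟩ <;> split <;>
    simp only [max_le_iff] <;> constructor <;> linarith [abs_nonneg a, le_abs_self a, neg_abs_le a]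

lemma measurable_gval (a : ℝ) : Measurable (gval a) := by
  unfold gval
  exact Measurable.ite (measurableSet_le measurable_const measurable_id)
    ((measurable_const.sub measurable_id).max measurable_const)
    ((measurable_id.sub measurable_const).max measurable_const)

-- monotone indicator
lemma mono_ind (x : ℝ) : Monotone (fun v => if x < v then (1:ℝ) else 0) := by
  intro v w hvw; dsimp; split_ifs with h1 h2 h2 <;> norm_num <;> linarith

lemma II (x b c : ℝ) : IntervalIntegrable (fun v => if x < v then (1:ℝ) else 0) volume b c :=
  (mono_ind x).intervalIntegrable

lemma integral_ind_le (x b c : ℝ) (hbc : b ≤ c) :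
    ∫ v in b..c, (if x < v then (1:ℝ) else 0) = max (c - max x b) 0 := by
  rw [intervalIntegral.integral_of_le hbc]
  have h1 : (fun v => if x < v then (1:ℝ) else 0) = (Set.Ioi x).indicator (fun _ => (1:ℝ)) := by
    funext v; simp [Set.indicator_apply, Set.mem_Ioi]
  rw [h1, MeasureTheory.integral_indicator_const _ measurableSet_Ioi]
  rw [Measure.real, Measure.restrict_apply measurableSet_Ioi]
  have : Set.Ioi x ∩ Set.Ioc b c = Set.Ioc (max x b) c := by
    ext v; simp [Set.mem_Ioi, Set.mem_Ioc, max_lt_iff]; tauto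
  rw [this, Real.volume_Ioc, ENNReal.toReal_ofReal', smul_eq_mul, mul_one]

lemma gval_eval (a x : ℝ) :
    ∫ v in (0:ℝ)..a, ((if x < v then (1:ℝ) else 0) - (if x < 0 then 1 else 0)) = gval a x := by
  rw [intervalIntegral.integral_sub (II x 0 a) (intervalIntegrable_const)]
  rw [intervalIntegral.integral_const, smul_eq_mul, sub_zero]
  unfold gval
  rcases le_or_gt 0 a with ha | ha
  · rw [integral_ind_le x 0 a ha]
    rcases le_or_gt 0 x with hx | hx
    · rw [if_pos hx, if_neg (not_lt.mpr hx), max_eq_left hx]; ring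
    · rw [if_neg (not_le.mpr hx), if_pos hx, max_eq_right hx.le, mul_one,
        max_eq_left (by linarith), max_eq_right (by linarith)]; ring
  · rw [intervalIntegral.integral_symm, integral_ind_le x a 0 ha.le]
    rcases le_or_gt 0 x with hx | hx
    · rw [if_pos hx, if_neg (not_lt.mpr hx), max_eq_left (show a ≤ x by linarith),
        max_eq_right (show (0:ℝ) - x ≤ 0 by linarith), max_eq_right (show a - x ≤ 0 by linarith)]
      ring
    · rw [if_neg (not_le.mpr hx), if_pos hx, mul_one]
      rcases le_or_gt a x with hax | hax
      · rw [max_eq_left hax, max_eq_left (by linarith), max_eq_left (by linarith)]; ring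
      · rw [max_eq_right hax.le, max_eq_left (by linarith), max_eq_right (by linarith)]; ring


lemma fubini_setIoc {Ω : Type*} [MeasurableSpace Ω] (P : Measure Ω) [IsProbabilityMeasure P]
    (e : Ω → ℝ) (he : Measurable e) (b c : ℝ) :
    ∫ ω, (∫ v in Set.Ioc b c, ((if e ω < v then (1:ℝ) else 0) - (if e ω < 0 then 1 else 0))) ∂P
      = ∫ v in Set.Ioc b c,
          ((P {ω | e ω < v}).toReal - (P {ω | e ω < 0}).toReal) := by
  haveI : IsFiniteMeasure (volume.restrict (Set.Ioc b c)) :=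
    ⟨by rw [Measure.restrict_apply_univ]; exact measure_Ioc_lt_top⟩
  set μ := volume.restrict (Set.Ioc b c) with hμ
  have hmeas : Measurable (Function.uncurry fun (v : ℝ) (ω : Ω) =>
      ((if e ω < v then (1:ℝ) else 0) - (if e ω < 0 then 1 else 0))) := by
    apply Measurable.sub
    · exact Measurable.ite (measurableSet_lt (he.comp measurable_snd) measurable_fst)
        measurable_const measurable_const
    · exact Measurable.ite ((measurableSet_lt he measurable_const).preimage measurable_snd)
        measurable_const measurable_const
  have hint : Integrable (Function.uncurry fun (v : ℝ) (ω : Ω) =>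
      ((if e ω < v then (1:ℝ) else 0) - (if e ω < 0 then 1 else 0))) (μ.prod P) := by
    refine (integrable_const (2:ℝ)).mono' hmeas.aestronglyMeasurable ?_
    filter_upwards with p
    have : ∀ (q : Prop) [Decidable q], (0:ℝ) ≤ (if q then (1:ℝ) else 0) ∧
        (if q then (1:ℝ) else 0) ≤ 1 := by intro q _; split <;> norm_num
    obtain ⟨h1,h2⟩ := this (e p.2 < p.1); obtain ⟨h3,h4⟩ := this (e p.2 < 0)
    simp only [Function.uncurry, Real.norm_eq_abs, abs_sub_le_iff]
    constructor <;> linarith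
  rw [← MeasureTheory.integral_integral_swap hint]
  apply setIntegral_congr_fun measurableSet_Ioc
  intro v _
  have h1 : ∀ t : ℝ, ∫ ω, (if e ω < t then (1:ℝ) else 0) ∂P = (P {ω | e ω < t}).toReal := by
    intro t
    have : (fun ω => if e ω < t then (1:ℝ) else 0)
        = Set.indicator {ω | e ω < t} (fun _ => (1:ℝ)) := by
      funext ω; simp [Set.indicator_apply, Set.mem_setOf_eq]
    rw [this, MeasureTheory.integral_indicator_const _ (measurableSet_lt he measurable_const)]
    simp [Measure.real]
  simp only []
  rw [integral_sub, h1, h1]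
  · exact Integrable.mono' (integrable_const 1) (Measurable.aestronglyMeasurable (by
      exact Measurable.ite (measurableSet_lt he measurable_const) measurable_const measurable_const))
      (by filter_upwards with ω; rw [Real.norm_eq_abs]; split <;> norm_num)
  · exact Integrable.mono' (integrable_const 1) (Measurable.aestronglyMeasurable (by
      exact Measurable.ite (measurableSet_lt he measurable_const) measurable_const measurable_const))
      (by filter_upwards with ω; rw [Real.norm_eq_abs]; split <;> norm_num)

lemma G_eq_F {Ω : Type*} [MeasurableSpace Ω] (P : Measure Ω) [IsProbabilityMeasure P]
    (e : Ω → ℝ) (F : ℝ → ℝ) (hF : ∀ t, (P {ω | e ω ≤ t}).toReal = F t)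
    (v : ℝ) (hc : ContinuousAt F v) : (P {ω | e ω < v}).toReal = F v := by
  have hun : {ω | e ω < v} = ⋃ n : ℕ, {ω | e ω ≤ v - 1/(n+1)} := by
    ext ω
    simp only [Set.mem_setOf_eq, Set.mem_iUnion]
    constructor
    · intro h
      obtain ⟨n, hn⟩ := exists_nat_one_div_lt (show 0 < v - e ω by linarith)
      exact ⟨n, by push_cast at hn ⊢; linarith⟩
    · rintro ⟨n, hn⟩
      have : (0:ℝ) < 1/(n+1) := by positivity
      linarith
  have hmono : Monotone (fun n : ℕ => {ω | e ω ≤ v - 1/(n+1)}) := by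
    intro m n hmn ω hω
    simp only [Set.mem_setOf_eq] at *
    have h1 : (1:ℝ)/(n+1) ≤ 1/(m+1) := by
      apply one_div_le_one_div_of_le (by positivity)
      have : (m:ℝ) ≤ n := by exact_mod_cast hmn
      linarith
    linarith
  have htend : Tendsto (fun n : ℕ => P {ω | e ω ≤ v - 1/(n+1)}) atTop (nhds (P {ω | e ω < v})) := by
    rw [hun]; exact tendsto_measure_iUnion_atTop hmono
  have htoReal : Tendsto (fun n : ℕ => (P {ω | e ω ≤ v - 1/(n+1)}).toReal) atTop
      (nhds ((P {ω | e ω < v}).toReal)) :=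
    (ENNReal.tendsto_toReal (measure_ne_top P _)).comp htend
  have htend2 : Tendsto (fun n : ℕ => F (v - 1/(n+1))) atTop (nhds (F v)) := by
    apply hc.tendsto.comp
    have : Tendsto (fun n : ℕ => (1:ℝ)/(n+1)) atTop (nhds 0) := tendsto_one_div_add_atTop_nhds_zero_nat
    have := (tendsto_const_nhds (x := v)).sub this
    simpa using this
  simp only [hF] at htoReal
  exact tendsto_nhds_unique htoReal htend2

lemma mean_formula {Ω : Type*} [MeasurableSpace Ω] (P : Measure Ω) [IsProbabilityMeasure P]
    (e : Ω → ℝ) (he : Measurable e) (a : ℝ) :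
    ∫ ω, gval a (e ω) ∂P
      = ∫ v in (0:ℝ)..a, ((P {ω | e ω < v}).toReal - (P {ω | e ω < 0}).toReal) := by
  have key : ∀ ω, gval a (e ω)
      = ∫ v in (0:ℝ)..a, ((if e ω < v then (1:ℝ) else 0) - (if e ω < 0 then 1 else 0)) :=
    fun ω => (gval_eval a (e ω)).symm
  simp only [key]
  rcases le_or_gt 0 a with ha | ha
  · simp only [intervalIntegral.integral_of_le ha]
    exact fubini_setIoc P e he 0 a
  · simp only [intervalIntegral.integral_of_ge ha.le]
    rw [integral_neg]
    rw [fubini_setIoc P e he a 0]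


lemma abs_le_of_uIcc {v a : ℝ} (hv : v ∈ Set.uIcc 0 a) : |v| ≤ |a| := by
  rw [Set.mem_uIcc] at hv
  rcases hv with ⟨h1, h2⟩ | ⟨h1, h2⟩ <;>
    exact abs_le.mpr ⟨by cases abs_cases a <;> linarith, by cases abs_cases a <;> linarith⟩

lemma taylor_est (F f f' : ℝ → ℝ) (δ M : ℝ) (hδ : 0 < δ)
    (hdens : ∀ x ∈ Set.Ioo (-δ) δ, HasDerivAt F (f x) x)
    (hfcont : ContinuousOn f (Set.Ioo (-δ) δ))
    (hf' : ∀ x ∈ Set.Ioo (-δ) δ, HasDerivAt f (f' x) x ∧ |f' x| ≤ M)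
    (a : ℝ) (ha : |a| < δ) :
    |(∫ v in (0:ℝ)..a, (F v - F 0)) - f 0 * a^2 / 2| ≤ M * a^2 * |a| := by
  have hM : 0 ≤ M := le_trans (abs_nonneg _) (hf' 0 ⟨by linarith, hδ⟩).2
  have hsub : Set.uIcc (0:ℝ) a ⊆ Set.Ioo (-δ) δ := by
    intro v hv
    have := abs_le_of_uIcc hv
    constructor <;> cases abs_cases v <;> linarith
  -- Lipschitz bound for f
  have lip : ∀ t ∈ Set.Ioo (-δ) δ, |f t - f 0| ≤ M * |t| := by
    intro t ht
    have := Convex.norm_image_sub_le_of_norm_hasDerivWithin_le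
      (fun x hx => ((hf' x hx).1).hasDerivWithinAt)
      (fun x hx => by rw [Real.norm_eq_abs]; exact (hf' x hx).2)
      (convex_Ioo _ _) (Set.mem_Ioo.mpr ⟨by linarith, hδ⟩) ht
    simpa [Real.norm_eq_abs] using this
  -- pointwise Taylor bound for F
  have pt : ∀ v ∈ Set.uIcc (0:ℝ) a, |F v - F 0 - f 0 * v| ≤ M * a^2 := by
    intro v hv
    have hsub2 : Set.uIcc (0:ℝ) v ⊆ Set.Ioo (-δ) δ := by
      refine Set.Subset.trans ?_ hsub
      rw [Set.uIcc_subset_uIcc_iff_mem]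
      exact ⟨Set.left_mem_uIcc, hv⟩
    have hFint : F v - F 0 = ∫ t in (0:ℝ)..v, f t := by
      rw [intervalIntegral.integral_eq_sub_of_hasDerivAt
        (fun t ht => hdens t (hsub2 ht))
        ((hfcont.mono hsub2).intervalIntegrable)]
    have hsplit : F v - F 0 - f 0 * v = ∫ t in (0:ℝ)..v, (f t - f 0) := by
      rw [intervalIntegral.integral_sub ((hfcont.mono hsub2).intervalIntegrable)
        intervalIntegrable_const, intervalIntegral.integral_const, ← hFint]
      simp [mul_comm]
    rw [hsplit]
    have hb := intervalIntegral.norm_integral_le_of_norm_le_const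
      (f := fun t => f t - f 0) (C := M * |v|) (a := (0:ℝ)) (b := v) (by
        intro t ht
        have ht' : t ∈ Set.uIcc (0:ℝ) v := Set.uIoc_subset_uIcc ht
        have h1 := lip t (hsub2 ht')
        have h2 := abs_le_of_uIcc ht'
        rw [Real.norm_eq_abs]
        calc |f t - f 0| ≤ M * |t| := h1
          _ ≤ M * |v| := by nlinarith)
    rw [Real.norm_eq_abs, sub_zero] at hb
    calc |∫ t in (0:ℝ)..v, (f t - f 0)| ≤ M * |v| * |v| := hb
      _ ≤ M * a^2 := by
        have h := abs_le_of_uIcc hv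
        have h2 : |v| * |v| ≤ |a| * |a| := mul_le_mul h h (abs_nonneg v) (abs_nonneg a)
        nlinarith [sq_abs a]
  -- now integrate the pointwise bound
  have hFcont : ContinuousOn (fun v => F v - F 0) (Set.uIcc (0:ℝ) a) :=
    fun v hv => ((hdens v (hsub hv)).continuousAt.continuousWithinAt).sub continuousWithinAt_const
  have hdiff : (∫ v in (0:ℝ)..a, (F v - F 0)) - f 0 * a^2 / 2
      = ∫ v in (0:ℝ)..a, (F v - F 0 - f 0 * v) := by
    rw [intervalIntegral.integral_sub (hFcont.intervalIntegrable)
      (Continuous.intervalIntegrable (by continuity) 0 a)]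
    have : ∫ v in (0:ℝ)..a, f 0 * v = f 0 * (a^2/2) := by
      rw [intervalIntegral.integral_const_mul, integral_id]
      ring
    rw [this]; ring
  rw [hdiff]
  have := intervalIntegral.norm_integral_le_of_norm_le_const
    (f := fun v => F v - F 0 - f 0 * v) (C := M * a^2) (a := (0:ℝ)) (b := a)
    (fun v hv => by rw [Real.norm_eq_abs]; exact pt v (Set.uIoc_subset_uIcc hv))
  rwa [Real.norm_eq_abs, sub_zero] at this

lemma sqrt_inv_sq (n : ℕ) : ((Real.sqrt n)⁻¹)^2 = (n:ℝ)⁻¹ := by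
  rw [inv_pow, Real.sq_sqrt (Nat.cast_nonneg n)]

lemma a_sq_le (r n : ℕ) (Xr u : Fin r → ℝ) :
    ((Real.sqrt n)⁻¹ * ∑ k, Xr k * u k)^2
      ≤ ((n:ℝ)⁻¹ * ∑ k, (Xr k)^2) * (∑ k, (u k)^2) := by
  rw [mul_pow, sqrt_inv_sq, mul_assoc]
  have h := Finset.sum_mul_sq_le_sq_mul_sq Finset.univ Xr u
  have h2 : (0:ℝ) ≤ ((n:ℝ))⁻¹ := by positivity
  exact mul_le_mul_of_nonneg_left h h2

lemma Qn_expand (r n : ℕ) (X : Fin n → Fin r → ℝ) (u : Fin r → ℝ) :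
    ∑ i, ((Real.sqrt n)⁻¹ * ∑ k, X i k * u k)^2
      = ∑ k, ∑ l, ((n:ℝ)⁻¹ * ∑ i, X i k * X i l) * (u k * u l) := by
  have h1 : ∀ i : Fin n, ((Real.sqrt n)⁻¹ * ∑ k, X i k * u k)^2
      = ∑ k, ∑ l, (n:ℝ)⁻¹ * ((X i k * u k) * (X i l * u l)) := by
    intro i
    rw [mul_pow, sqrt_inv_sq, sq, Finset.sum_mul_sum, Finset.mul_sum]
    exact Finset.sum_congr rfl fun k _ => by rw [Finset.mul_sum]
  simp only [h1]
  rw [Finset.sum_comm]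
  refine Finset.sum_congr rfl fun k _ => ?_
  rw [Finset.sum_comm]
  refine Finset.sum_congr rfl fun l _ => ?_
  rw [Finset.mul_sum, Finset.sum_mul]
  exact Finset.sum_congr rfl fun i _ => by ring


lemma main_aux {Ω : Type*} [MeasurableSpace Ω]
    (P : Measure Ω) [IsProbabilityMeasure P]
    (ε : ℕ → Ω → ℝ) (hε : ∀ i, Measurable (ε i))
    (hindep : iIndepFun ε P)
    (hident : ∀ i, IdentDistrib (ε i) (ε 0) P P)
    (F f : ℝ → ℝ) (hF : ∀ i t, (P {ω | ε i ω ≤ t}).toReal = F t)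
    (δ : ℝ) (hδ : 0 < δ)
    (hdens : ∀ x ∈ Set.Ioo (-δ) δ, HasDerivAt F (f x) x)
    (hfcont : ContinuousOn f (Set.Ioo (-δ) δ))
    (f' : ℝ → ℝ) (M : ℝ)
    (hf' : ∀ x ∈ Set.Ioo (-δ) δ, HasDerivAt f (f' x) x ∧ |f' x| ≤ M)
    (a : ∀ n : ℕ, Fin n → ℝ)
    (hsmall : ∀ η > (0:ℝ), ∀ᶠ n : ℕ in atTop, ∀ i : Fin n, |a n i| < η)
    (Q : ℝ) (hQn : Tendsto (fun n : ℕ => ∑ i : Fin n, (a n i)^2) atTop (nhds Q)) :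
    TendstoInMeasure P (fun (n : ℕ) (ω : Ω) => ∑ i : Fin n, gval (a n i) (ε (i:ℕ) ω))
      atTop (fun _ => f 0 / 2 * Q) := by
  classical
  have hM : 0 ≤ M := le_trans (abs_nonneg _) (hf' 0 ⟨by linarith, hδ⟩).2
  set m : ℝ → ℝ := fun b => ∫ ω, gval b (ε 0 ω) ∂P with hm_def
  have hint : ∀ (i : ℕ) (b : ℝ), Integrable (fun ω => gval b (ε i ω)) P := by
    intro i b
    refine (integrable_const |b|).mono' ((measurable_gval b).comp (hε i)).aestronglyMeasurable ?_
    filter_upwards with ω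
    rw [Real.norm_eq_abs, abs_of_nonneg (gval_nonneg _ _)]
    exact gval_le_abs _ _
  have hmem : ∀ (i : ℕ) (b : ℝ), MemLp (fun ω => gval b (ε i ω)) 2 P := by
    intro i b
    refine MemLp.of_bound ((measurable_gval b).comp (hε i)).aestronglyMeasurable |b| ?_
    filter_upwards with ω
    rw [Real.norm_eq_abs, abs_of_nonneg (gval_nonneg _ _)]
    exact gval_le_abs _ _
  have hE : ∀ (i : ℕ) (b : ℝ), ∫ ω, gval b (ε i ω) ∂P = m b := by
    intro i b
    have := ((hident i).comp (measurable_gval b)).integral_eq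
    simpa [Function.comp] using this
  have hm_nonneg : ∀ b, 0 ≤ m b := fun b => integral_nonneg fun ω => gval_nonneg _ _
  have hm_est : ∀ b : ℝ, |b| < δ → |m b - f 0 * b^2 / 2| ≤ M * b^2 * |b| := by
    intro b hb
    have h1 : m b = ∫ v in (0:ℝ)..b, (F v - F 0) := by
      rw [hm_def]
      simp only
      rw [mean_formula P (ε 0) (hε 0)]
      apply intervalIntegral.integral_congr
      intro v hv
      dsimp only
      have hv' : v ∈ Set.Ioo (-δ) δ := by
        have := abs_le_of_uIcc hv
        constructor <;> cases abs_cases v <;> linarith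
      have h0 : (0:ℝ) ∈ Set.Ioo (-δ) δ := ⟨by linarith, hδ⟩
      rw [G_eq_F P (ε 0) F (hF 0) v (hdens v hv').continuousAt,
          G_eq_F P (ε 0) F (hF 0) 0 (hdens 0 h0).continuousAt]
    rw [h1]
    exact taylor_est F f f' δ M hδ hdens hfcont hf' b hb
  have hvar1 : ∀ (i : ℕ) (b : ℝ), variance (fun ω => gval b (ε i ω)) P ≤ |b| * m b := by
    intro i b
    have h1 := variance_le_expectation_sq (μ := P)
      ((measurable_gval b).comp (hε i)).aestronglyMeasurable
    have h2 : ∫ ω, ((fun ω => gval b (ε i ω))^2) ω ∂P ≤ ∫ ω, |b| * gval b (ε i ω) ∂P := by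
      apply integral_mono ?_ ((hint i b).const_mul |b|)
      · intro ω
        simp only [Pi.pow_apply]
        nlinarith [gval_nonneg b (ε i ω), gval_le_abs b (ε i ω)]
      · refine (integrable_const (|b|^2)).mono'
          ((((measurable_gval b).comp (hε i)).pow_const 2).aestronglyMeasurable) ?_
        filter_upwards with ω
        simp only [Pi.pow_apply, Real.norm_eq_abs, sq_abs, abs_pow]
        have hg1 := gval_nonneg b (ε i ω)
        have hg2 := gval_le_abs b (ε i ω)
        calc (gval b (ε i ω))^2 ≤ |b|^2 := pow_le_pow_left₀ hg1 hg2 2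
          _ = b^2 := sq_abs b
    calc variance (fun ω => gval b (ε i ω)) P ≤ _ := h1
      _ ≤ ∫ ω, |b| * gval b (ε i ω) ∂P := h2
      _ = |b| * m b := by rw [integral_const_mul, hE]
  -- the sequences
  set Qn : ℕ → ℝ := fun n => ∑ i : Fin n, (a n i)^2 with hQn_def
  set Vn : ℕ → ℝ := fun n => ∑ i : Fin n, variance (fun ω => gval (a n i) (ε (i:ℕ) ω)) P
    with hVn_def
  set μn : ℕ → ℝ := fun n => ∑ i : Fin n, m (a n i) with hμn_def
  have hQn_nonneg : ∀ n, 0 ≤ Qn n := fun n => Finset.sum_nonneg fun i _ => sq_nonneg _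
  have hQpos : 0 ≤ Q :=
    le_of_tendsto_of_tendsto' tendsto_const_nhds hQn fun n => hQn_nonneg n
  have hQev : ∀ᶠ n : ℕ in atTop, Qn n < Q + 1 := hQn.eventually_lt_const (by linarith)
  -- convergence of means
  have hμL : Tendsto μn atTop (nhds (f 0 / 2 * Q)) := by
    have hkey : Tendsto (fun n => μn n - f 0 / 2 * Qn n) atTop (nhds 0) := by
      rw [NormedAddCommGroup.tendsto_nhds_zero]
      intro c hc
      have hQ2 : (0:ℝ) < (M+1)*(Q+2) := by nlinarith
      set η := min (δ/2) (c/(2*(M+1)*(Q+2))) with hη_def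
      have hηpos : 0 < η := lt_min (by linarith) (by positivity)
      have hηδ : η ≤ δ/2 := min_le_left _ _
      have hηc : η ≤ c/(2*(M+1)*(Q+2)) := min_le_right _ _
      filter_upwards [hsmall η hηpos, hQev] with n h1 h2
      have hbound : ‖μn n - f 0 / 2 * Qn n‖ ≤ M * η * Qn n := by
        have hrw : μn n - f 0 / 2 * Qn n
            = ∑ i : Fin n, (m (a n i) - f 0 * (a n i)^2 / 2) := by
          rw [hμn_def, hQn_def]
          simp only
          rw [Finset.sum_sub_distrib, Finset.mul_sum]
          congr 1
          exact Finset.sum_congr rfl fun i _ => by ring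
        rw [hrw, Real.norm_eq_abs]
        calc |∑ i : Fin n, (m (a n i) - f 0 * (a n i)^2 / 2)|
            ≤ ∑ i : Fin n, |m (a n i) - f 0 * (a n i)^2 / 2| :=
              Finset.abs_sum_le_sum_abs _ _
          _ ≤ ∑ i : Fin n, (M * η) * (a n i)^2 := by
              apply Finset.sum_le_sum
              intro i _
              have hi := h1 i
              have hest := hm_est (a n i) (by linarith)
              calc |m (a n i) - f 0 * (a n i)^2 / 2| ≤ M * (a n i)^2 * |a n i| := hest
                _ ≤ (M * η) * (a n i)^2 := by
                    linarith [mul_le_mul_of_nonneg_left hi.le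
                      (mul_nonneg hM (sq_nonneg (a n i)))]
          _ = M * η * Qn n := by rw [← Finset.mul_sum]
      have hQnn := hQn_nonneg n
      have s1 : M * η * Qn n ≤ M * η * (Q+1) := by
        exact mul_le_mul_of_nonneg_left h2.le (mul_nonneg hM hηpos.le)
      have s2 : M * η * (Q+1) ≤ (M+1) * (Q+2) * η := by nlinarith
      have s3 : (M+1) * (Q+2) * η ≤ c/2 := by
        have := mul_le_mul_of_nonneg_left hηc (le_of_lt hQ2)
        calc (M+1) * (Q+2) * η ≤ (M+1)*(Q+2) * (c/(2*(M+1)*(Q+2))) := by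
              exact mul_le_mul_of_nonneg_left hηc (le_of_lt hQ2)
          _ = c/2 := by field_simp
      calc ‖μn n - f 0 / 2 * Qn n‖ ≤ M * η * Qn n := hbound
        _ < c := by linarith
    have heq : μn = fun n => (μn n - f 0 / 2 * Qn n) + f 0 / 2 * Qn n :=
      funext fun n => by ring
    rw [heq]
    have := hkey.add (hQn.const_mul (f 0 / 2))
    simpa using this
  -- convergence of variances
  have hVn0 : Tendsto Vn atTop (nhds 0) := by
    set C : ℝ := |f 0|/2 + M*δ + 1 with hC_def
    have hC : 0 < C := by positivity
    have hmC : ∀ b : ℝ, |b| < δ → m b ≤ C * b^2 := by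
      intro b hb
      have h1 := (abs_le.mp (hm_est b hb)).2
      rw [hC_def]
      have t1 : f 0 * b^2/2 ≤ |f 0| * b^2/2 := by nlinarith [le_abs_self (f 0), sq_nonneg b]
      have t2 : M * b^2 * |b| ≤ M * b^2 * δ :=
        mul_le_mul_of_nonneg_left hb.le (mul_nonneg hM (sq_nonneg b))
      nlinarith [sq_nonneg b]
    rw [NormedAddCommGroup.tendsto_nhds_zero]
    intro c hc
    have hQ2 : (0:ℝ) < C*(Q+2) := by nlinarith
    set η := min (δ/2) (c/(2*C*(Q+2))) with hη_def
    have hηpos : 0 < η := lt_min (by linarith) (by positivity)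
    have hηδ : η ≤ δ/2 := min_le_left _ _
    have hηc : η ≤ c/(2*C*(Q+2)) := min_le_right _ _
    filter_upwards [hsmall η hηpos, hQev] with n h1 h2
    have hVnn : 0 ≤ Vn n := Finset.sum_nonneg fun i _ => variance_nonneg _ _
    have hbound : Vn n ≤ η * C * Qn n := by
      rw [hVn_def, hQn_def]
      simp only
      rw [Finset.mul_sum]
      apply Finset.sum_le_sum
      intro i _
      have hi := h1 i
      have hmc := hmC (a n i) (by linarith)
      have hv := hvar1 (i:ℕ) (a n i)
      have hmn := hm_nonneg (a n i)
      have habs := abs_nonneg (a n i)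
      calc variance (fun ω => gval (a n i) (ε (i:ℕ) ω)) P ≤ |a n i| * m (a n i) := hv
        _ ≤ η * (C * (a n i)^2) := by nlinarith [sq_nonneg (a n i)]
        _ = η * C * (a n i)^2 := by ring
    rw [Real.norm_eq_abs, abs_of_nonneg hVnn]
    have hQnn := hQn_nonneg n
    have s1 : η * C * Qn n ≤ η * C * (Q+1) := by
      exact mul_le_mul_of_nonneg_left h2.le (mul_nonneg hηpos.le hC.le)
    have s2 : η * C * (Q+1) ≤ C * (Q+2) * η := by nlinarith
    have s3 : C * (Q+2) * η ≤ c/2 := by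
      calc C * (Q+2) * η ≤ C*(Q+2) * (c/(2*C*(Q+2))) := by
            exact mul_le_mul_of_nonneg_left hηc (le_of_lt hQ2)
        _ = c/2 := by field_simp
    have hfin : Vn n ≤ c/2 := hbound.trans (s1.trans (s2.trans s3))
    linarith
  -- per-n identities
  have hESum : ∀ n : ℕ, ∫ ω, (∑ i : Fin n, gval (a n i) (ε (i:ℕ) ω)) ∂P = μn n := by
    intro n
    rw [integral_finset_sum _ (fun (i : Fin n) _ => hint i.val (a n i))]
    exact Finset.sum_congr rfl fun (i : Fin n) _ => hE i.val (a n i)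
  have hMemSum : ∀ n : ℕ, MemLp (fun ω => ∑ i : Fin n, gval (a n i) (ε (i:ℕ) ω)) 2 P := by
    intro n
    have h := memLp_finset_sum' (μ := P) (p := 2) Finset.univ
      (f := fun (i : Fin n) ω => gval (a n i) (ε (i:ℕ) ω)) (fun i _ => hmem (i:ℕ) (a n i))
    have heq : (∑ i : Fin n, fun ω => gval (a n i) (ε (i:ℕ) ω))
        = fun ω => ∑ i : Fin n, gval (a n i) (ε (i:ℕ) ω) := by
      funext ω; simp [Finset.sum_apply]
    rwa [heq] at h
  have hVarSum : ∀ n : ℕ,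
      variance (fun ω => ∑ i : Fin n, gval (a n i) (ε (i:ℕ) ω)) P = Vn n := by
    intro n
    have hpair : Set.Pairwise ↑(Finset.univ : Finset (Fin n))
        (fun i j => IndepFun (fun ω => gval (a n i) (ε (i:ℕ) ω))
          (fun ω => gval (a n j) (ε (j:ℕ) ω)) P) := by
      intro i _ j _ hij
      have hij' : (i:ℕ) ≠ (j:ℕ) := fun h => hij (Fin.val_injective h)
      exact (hindep.indepFun hij').comp (measurable_gval (a n i)) (measurable_gval (a n j))
    have h := IndepFun.variance_sum (μ := P)
      (X := fun (i : Fin n) ω => gval (a n i) (ε (i:ℕ) ω)) (s := Finset.univ)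
      (fun i _ => hmem (i:ℕ) (a n i)) hpair
    have heq : (∑ i : Fin n, fun ω => gval (a n i) (ε (i:ℕ) ω))
        = fun ω => ∑ i : Fin n, gval (a n i) (ε (i:ℕ) ω) := by
      funext ω; simp [Finset.sum_apply]
    rwa [heq] at h
  -- conclusion
  rw [tendstoInMeasure_iff_dist]
  intro c hc
  have hupper : Tendsto (fun n : ℕ => ENNReal.ofReal (Vn n / (c/2)^2)) atTop (nhds 0) := by
    have h1 : Tendsto (fun n => Vn n / (c/2)^2) atTop (nhds 0) := by
      simpa using hVn0.div_const ((c/2)^2)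
    have h2 := ENNReal.tendsto_ofReal h1
    simpa using h2
  refine tendsto_of_tendsto_of_tendsto_of_le_of_le'
    (tendsto_const_nhds : Tendsto (fun _ : ℕ => (0:ℝ≥0∞)) atTop (nhds 0))
    hupper (Eventually.of_forall fun n => zero_le) ?_
  · filter_upwards [Metric.tendsto_nhds.mp hμL (c/2) (half_pos hc)] with n hn
    have hsub : {ω | c ≤ dist (∑ i : Fin n, gval (a n i) (ε (i:ℕ) ω)) (f 0 / 2 * Q)}
        ⊆ {ω | c/2 ≤ |(∑ i : Fin n, gval (a n i) (ε (i:ℕ) ω)) - μn n|} := by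
      intro ω hω
      simp only [Set.mem_setOf_eq, Real.dist_eq] at *
      have htri := abs_sub_le (∑ i : Fin n, gval (a n i) (ε (i:ℕ) ω)) (μn n) (f 0 / 2 * Q)
      have := abs_sub_comm (μn n) (f 0 / 2 * Q)
      linarith [abs_nonneg ((μn n) - f 0 / 2 * Q)]
    have hcheb := meas_ge_le_variance_div_sq (μ := P) (hMemSum n) (half_pos hc)
    rw [hESum n, hVarSum n] at hcheb
    exact le_trans (measure_mono hsub) hcheb


/-- Convergence in probability of the quadratic remainder term `B_n(u)`: for i.i.d. errors with
distribution function `F` differentiable near `0` with continuous density `f` having bounded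
derivative near `0`, and a triangular design with `n^{-1} max_i ‖𝕏_i‖² → 0` and
`n^{-1} Σ_i 𝕏_i 𝕏_iᵗ → Υ` positive definite,
`B_n(u) = Σ_i ∫_0^{n^{-1/2}𝕏_iᵗu} (1_{ε_i < v} − 1_{ε_i < 0}) dv` converges in probability to
`(1/2) f(0) uᵗΥu`. -/
theorem Bn_tendsto_in_probability {Ω : Type*} [MeasurableSpace Ω]
    (P : Measure Ω) [IsProbabilityMeasure P]
    (ε : ℕ → Ω → ℝ) (hε : ∀ i, Measurable (ε i))
    (hindep : iIndepFun ε P)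
    (hident : ∀ i, IdentDistrib (ε i) (ε 0) P P)
    (F f : ℝ → ℝ) (hF : ∀ i t, (P {ω | ε i ω ≤ t}).toReal = F t)
    (δ : ℝ) (hδ : 0 < δ)
    (hdens : ∀ x ∈ Set.Ioo (-δ) δ, HasDerivAt F (f x) x)
    (hfcont : ContinuousOn f (Set.Ioo (-δ) δ))
    (f' : ℝ → ℝ) (M : ℝ)
    (hf' : ∀ x ∈ Set.Ioo (-δ) δ, HasDerivAt f (f' x) x ∧ |f' x| ≤ M)
    (r : ℕ) (X : ∀ n : ℕ, Fin n → Fin r → ℝ)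
    (hmax : ∀ η > (0 : ℝ), ∀ᶠ n : ℕ in atTop, ∀ i : Fin n,
      (n : ℝ)⁻¹ * ∑ k, (X n i k) ^ 2 < η)
    (Υ : Matrix (Fin r) (Fin r) ℝ) (hΥpos : Υ.PosDef)
    (hΥ : ∀ k l, Tendsto (fun n : ℕ => (n : ℝ)⁻¹ * ∑ i, X n i k * X n i l)
      atTop (nhds (Υ k l)))
    (u : Fin r → ℝ) :
    TendstoInMeasure P
      (fun (n : ℕ) (ω : Ω) => ∑ i : Fin n,
        ∫ v in (0 : ℝ)..((Real.sqrt n)⁻¹ * ∑ k, X n i k * u k),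
          ((if ε i ω < v then (1 : ℝ) else 0) - (if ε i ω < 0 then 1 else 0)))
      atTop
      (fun _ => (1 / 2) * f 0 * ∑ k, ∑ l, u k * Υ k l * u l) := by
  have hsmall : ∀ η > (0:ℝ), ∀ᶠ n : ℕ in atTop, ∀ i : Fin n,
      |(Real.sqrt n)⁻¹ * ∑ k, X n i k * u k| < η := by
    intro η hη
    have hsu : (0:ℝ) ≤ ∑ k, (u k)^2 := Finset.sum_nonneg fun k _ => sq_nonneg _
    have hη' : (0:ℝ) < η^2/((∑ k, (u k)^2)+1) := by positivity
    filter_upwards [hmax _ hη'] with n hn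
    intro i
    have h1 := a_sq_le r n (X n i) u
    have h2 : ((n:ℝ)⁻¹ * ∑ k, (X n i k)^2) * (∑ k, (u k)^2)
        ≤ (η^2/((∑ k, (u k)^2)+1)) * (∑ k, (u k)^2) :=
      mul_le_mul_of_nonneg_right (hn i).le hsu
    have h3 : (η^2/((∑ k, (u k)^2)+1)) * (∑ k, (u k)^2) < η^2 := by
      rw [div_mul_eq_mul_div, div_lt_iff₀ (by positivity)]
      nlinarith
    by_contra hcon
    push_neg at hcon
    nlinarith [sq_abs ((Real.sqrt n)⁻¹ * ∑ k, X n i k * u k)]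
  have hQn : Tendsto (fun n : ℕ => ∑ i : Fin n, ((Real.sqrt n)⁻¹ * ∑ k, X n i k * u k)^2)
      atTop (nhds (∑ k, ∑ l, Υ k l * (u k * u l))) := by
    have heq : (fun n : ℕ => ∑ i : Fin n, ((Real.sqrt n)⁻¹ * ∑ k, X n i k * u k)^2)
        = fun n : ℕ => ∑ k, ∑ l, ((n:ℝ)⁻¹ * ∑ i, X n i k * X n i l) * (u k * u l) :=
      funext fun n => Qn_expand r n (X n) u
    rw [heq]
    apply tendsto_finset_sum
    intro k _
    apply tendsto_finset_sum
    intro l _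
    exact (hΥ k l).mul_const _
  have h := main_aux P ε hε hindep hident F f hF δ hδ hdens hfcont f' M hf'
    (fun n i => (Real.sqrt n)⁻¹ * ∑ k, X n i k * u k) hsmall _ hQn
  have h1 : (fun (n : ℕ) (ω : Ω) => ∑ i : Fin n,
      ∫ v in (0:ℝ)..((Real.sqrt n)⁻¹ * ∑ k, X n i k * u k),
        ((if ε i ω < v then (1:ℝ) else 0) - (if ε i ω < 0 then 1 else 0)))
      = fun (n : ℕ) (ω : Ω) => ∑ i : Fin n,
        gval ((Real.sqrt n)⁻¹ * ∑ k, X n i k * u k) (ε (i:ℕ) ω) := by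
    funext n ω
    exact Finset.sum_congr rfl fun i _ => gval_eval _ _
  have h2 : (fun _ : Ω => (1/2 : ℝ) * f 0 * ∑ k, ∑ l, u k * Υ k l * u l)
      = fun _ : Ω => f 0 / 2 * ∑ k, ∑ l, Υ k l * (u k * u l) := by
    funext ω
    have : ∑ k, ∑ l, u k * Υ k l * u l = ∑ k, ∑ l, Υ k l * (u k * u l) :=
      Finset.sum_congr rfl fun k _ => Finset.sum_congr rfl fun l _ => by ring
    rw [this]
    ring
  rw [h1, h2]
  exact h
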